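/- In diffusion on a graph, if at time t some edge uv satisfies one of: (sgn(w_u(t)-w_v(t)), sgn(w_u(t+1)-w_v(t+1))) ∈ {(1,1), (-1,-1), (0,1), (0,-1)}, then P(t+1) < P(t), where P(t) = Σ_v w_v(t)·w_v(t+1). -/
import Mathlib


open Finset Classical

/-- One step of the diffusion process: each vertex gains one chip from each
neighbour with a strictly larger label and loses one chip to each neighbour
with a strictly smaller label. -/
noncomputable def diffStep {n : ℕ} (G : SimpleGraph (Fin n)) (w : Fin n → ℤ) : Fin n → ℤ :=
  fun v => w v + ((Finset.univ.filter fun u => G.Adj v u ∧ w v < w u).card : ℤ)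
             - ((Finset.univ.filter fun u => G.Adj v u ∧ w u < w v).card : ℤ)

/-- The labelling at time `t` of the diffusion process started from `w0`. -/
noncomputable def diff {n : ℕ} (G : SimpleGraph (Fin n)) (w0 : Fin n → ℤ) (t : ℕ) : Fin n → ℤ :=
  (diffStep G)^[t] w0

/-- The potential `P(t) = ∑_v w_v(t) · w_v(t+1)`. -/
noncomputable def pot {n : ℕ} (G : SimpleGraph (Fin n)) (w0 : Fin n → ℤ) (t : ℕ) : ℤ :=
  ∑ v, diff G w0 t v * diff G w0 (t + 1) v

/-- `x_{uv}(t) = sgn(w_u(t) - w_v(t))` for edges, `0` for non-edges. -/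
noncomputable def xlab {n : ℕ} (G : SimpleGraph (Fin n)) (w0 : Fin n → ℤ)
    (u v : Fin n) (t : ℕ) : ℤ :=
  if G.Adj u v then Int.sign (diff G w0 t u - diff G w0 t v) else 0

/-- `y_{uv}(t) = sgn(w_u(t+1) - w_v(t+1))` for edges, `0` for non-edges. -/
noncomputable def ylab {n : ℕ} (G : SimpleGraph (Fin n)) (w0 : Fin n → ℤ)
    (u v : Fin n) (t : ℕ) : ℤ :=
  if G.Adj u v then Int.sign (diff G w0 (t + 1) u - diff G w0 (t + 1) v) else 0

/-- The label `(x_{uv}(t), y_{uv}(t))` of the edge `uv` at time `t`. -/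
noncomputable def elabel {n : ℕ} (G : SimpleGraph (Fin n)) (w0 : Fin n → ℤ)
    (u v : Fin n) (t : ℕ) : ℤ × ℤ :=
  (xlab G w0 u v t, ylab G w0 u v t)

lemma sign_as_ite (a : ℤ) : Int.sign a = (if 0 < a then (1:ℤ) else 0) - (if a < 0 then (1:ℤ) else 0) := by
  rcases lt_trichotomy a 0 with h|h|h
  · simp [Int.sign_eq_neg_one_of_neg h, h, not_lt.mpr h.le]
  · simp [h]
  · simp [Int.sign_eq_one_of_pos h, not_lt.mpr h.le, h]

lemma step_eq {n : ℕ} (G : SimpleGraph (Fin n)) (w : Fin n → ℤ) (v : Fin n) :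
    diffStep G w v = w v + ∑ u ∈ Finset.univ.filter (fun u => G.Adj v u), Int.sign (w u - w v) := by
  have h1 : ∑ u ∈ Finset.univ.filter (fun u => G.Adj v u), Int.sign (w u - w v)
      = ((Finset.univ.filter fun u => G.Adj v u ∧ w v < w u).card : ℤ)
        - ((Finset.univ.filter fun u => G.Adj v u ∧ w u < w v).card : ℤ) := by
    rw [Finset.sum_congr rfl (fun u _ => sign_as_ite (w u - w v)), Finset.sum_sub_distrib]
    simp [Finset.sum_boole, Finset.filter_filter, sub_pos, sub_neg]
  rw [h1, diffStep]
  ring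

lemma diff_succ {n : ℕ} (G : SimpleGraph (Fin n)) (w0 : Fin n → ℤ) (t : ℕ) (v : Fin n) :
    diff G w0 (t+1) v = diff G w0 t v
      + ∑ u ∈ Finset.univ.filter (fun u => G.Adj v u), Int.sign (diff G w0 t u - diff G w0 t v) := by
  have : diff G w0 (t+1) = diffStep G (diff G w0 t) := by
    simp [diff, Function.iterate_succ_apply']
  rw [this, step_eq]

lemma aux_nonneg (a d : ℤ) : 0 ≤ d * (Int.sign a + Int.sign d) := by
  rcases lt_trichotomy d 0 with hd|hd|hd <;>
  rcases lt_trichotomy a 0 with ha|ha|ha <;>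
  simp [Int.sign_eq_neg_one_of_neg, Int.sign_eq_one_of_pos, hd, ha] <;> nlinarith

lemma aux_pos (a d : ℤ)
    (h : (a.sign, d.sign) = ((1:ℤ),(1:ℤ)) ∨ (a.sign, d.sign) = ((-1:ℤ),(-1:ℤ)) ∨
         (a.sign, d.sign) = ((0:ℤ),(1:ℤ)) ∨ (a.sign, d.sign) = ((0:ℤ),(-1:ℤ))) :
    0 < d * (Int.sign a + Int.sign d) := by
  simp only [Prod.mk.injEq] at h
  rcases h with ⟨h1,h2⟩|⟨h1,h2⟩|⟨h1,h2⟩|⟨h1,h2⟩ <;>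
  first
  | (have hd : 0 < d := Int.sign_eq_one_iff_pos.mp h2; rw [h1, h2]; linarith)
  | (have hd : d < 0 := Int.sign_eq_neg_one_iff_neg.mp h2; rw [h1, h2]; linarith)

theorem stmt6 {n : ℕ} (G : SimpleGraph (Fin n)) (w0 : Fin n → ℤ) (t : ℕ)
    (u v : Fin n) (huv : G.Adj u v)
    (h : (Int.sign (diff G w0 t u - diff G w0 t v),
          Int.sign (diff G w0 (t + 1) u - diff G w0 (t + 1) v)) = ((1 : ℤ), (1 : ℤ)) ∨
         (Int.sign (diff G w0 t u - diff G w0 t v),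
          Int.sign (diff G w0 (t + 1) u - diff G w0 (t + 1) v)) = ((-1 : ℤ), (-1 : ℤ)) ∨
         (Int.sign (diff G w0 t u - diff G w0 t v),
          Int.sign (diff G w0 (t + 1) u - diff G w0 (t + 1) v)) = ((0 : ℤ), (1 : ℤ)) ∨
         (Int.sign (diff G w0 t u - diff G w0 t v),
          Int.sign (diff G w0 (t + 1) u - diff G w0 (t + 1) v)) = ((0 : ℤ), (-1 : ℤ))) :
    pot G w0 (t + 1) < pot G w0 t := by
  set w : Fin n → ℤ := diff G w0 t with hw
  set w1 : Fin n → ℤ := diff G w0 (t+1) with hw1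
  set w2 : Fin n → ℤ := diff G w0 (t+2) with hw2
  set F : Fin n → Fin n → ℤ := fun p q =>
    if G.Adj p q then w1 p * (Int.sign (w q - w p) + Int.sign (w1 q - w1 p)) else 0 with hF
  have hdiff : ∀ p : Fin n, w2 p - w p
      = ∑ q ∈ Finset.univ.filter (fun q => G.Adj p q),
          (Int.sign (w q - w p) + Int.sign (w1 q - w1 p)) := by
    intro p
    have e1 := diff_succ G w0 t p
    have e2 := diff_succ G w0 (t+1) p
    rw [← hw, ← hw1] at e1
    rw [← hw1, show t+1+1 = t+2 from rfl, ← hw2] at e2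
    rw [Finset.sum_add_distrib]
    linarith
  have key : pot G w0 (t+1) - pot G w0 t = ∑ p, ∑ q, F p q := by
    have hpot1 : pot G w0 (t+1) = ∑ p, w1 p * w2 p := by
      simp only [pot, ← hw1, show t+1+1 = t+2 from rfl, ← hw2]
    have hpot0 : pot G w0 t = ∑ p, w p * w1 p := by
      simp only [pot, ← hw, ← hw1]
    rw [hpot1, hpot0, ← Finset.sum_sub_distrib]
    refine Finset.sum_congr rfl fun p _ => ?_
    have e : w1 p * w2 p - w p * w1 p = w1 p * (w2 p - w p) := by ring
    rw [e, hdiff p, Finset.mul_sum, Finset.sum_filter]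
  have h2 : ∑ p, ∑ q, (F p q + F q p) = (∑ p, ∑ q, F p q) + (∑ p, ∑ q, F p q) := by
    simp only [Finset.sum_add_distrib]
    congr 1
    exact Finset.sum_comm
  have hTle : ∀ p q : Fin n, F p q + F q p ≤ 0 := by
    intro p q
    by_cases hpq : G.Adj p q
    · simp only [hF, if_pos hpq, if_pos hpq.symm]
      have e1 : w p - w q = -(w q - w p) := by ring
      have e2 : w1 p - w1 q = -(w1 q - w1 p) := by ring
      rw [e1, e2, Int.sign_neg, Int.sign_neg]
      have e3 : w1 p * ((w q - w p).sign + (w1 q - w1 p).sign)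
          + w1 q * (-(w q - w p).sign + -(w1 q - w1 p).sign)
          = -((w1 q - w1 p) * ((w q - w p).sign + (w1 q - w1 p).sign)) := by ring
      rw [e3]
      linarith [aux_nonneg (w q - w p) (w1 q - w1 p)]
    · have hqp : ¬ G.Adj q p := fun h' => hpq h'.symm
      simp [hF, hpq, hqp]
  have hstrict : F u v + F v u < 0 := by
    simp only [hF, if_pos huv, if_pos huv.symm]
    have e1 : w v - w u = -(w u - w v) := by ring
    have e2 : w1 v - w1 u = -(w1 u - w1 v) := by ring
    rw [e1, e2, Int.sign_neg, Int.sign_neg]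
    have hpos := aux_pos (w u - w v) (w1 u - w1 v) h
    have e3 : w1 u * (-(w u - w v).sign + -(w1 u - w1 v).sign)
        + w1 v * ((w u - w v).sign + (w1 u - w1 v).sign)
        = -((w1 u - w1 v) * ((w u - w v).sign + (w1 u - w1 v).sign)) := by ring
    rw [e3]
    linarith
  have hsum : (∑ p, ∑ q, F p q) + (∑ p, ∑ q, F p q) < 0 := by
    rw [← h2, ← Finset.sum_product']
    calc (∑ x ∈ Finset.univ ×ˢ Finset.univ, (F x.1 x.2 + F x.2 x.1))
        < ∑ _x ∈ Finset.univ ×ˢ Finset.univ, (0:ℤ) := by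
          refine Finset.sum_lt_sum (fun i _ => hTle i.1 i.2) ⟨(u,v), ?_, hstrict⟩
          exact Finset.mem_product.mpr ⟨Finset.mem_univ _, Finset.mem_univ _⟩
      _ = 0 := by simp
  linarith
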